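/- arXiv:2002.00257 — 3 statements merged into one kernel-verified Lean document; each statement's English description precedes it below -/
import Mathlib

section
/- Compositional barrier inequality: Let S₁,…,S_N be subsystems with state sets Xᵢ, transition functions fᵢ : Xᵢ × Uᵢ × Wᵢ → Xᵢ, output functions hᵢ : Xᵢ → Yᵢ (with the interconnection constraint that the internal input wᵢ of subsystem i is composed of outputs h_{ji}(x_j), j ≠ i, and ‖h_{ji}(x_j)‖ ≤ ‖h_j(x_j)‖). Suppose each Bᵢ : Xᵢ → ℝ≥0 satisfies: (a) Bᵢ(xᵢ) ≥ αᵢ(‖hᵢ(xᵢ)‖) for all xᵢ ∈ Xᵢ, and (b) for every xᵢ there exists uᵢ such that for all wᵢ: Bᵢ(fᵢ(xᵢ,uᵢ,wᵢ)) ≤ max{κᵢ(Bᵢ(xᵢ)), γ_{wi}(‖wᵢ‖)}, where ‖wᵢ‖ = max_{j≠i} ‖w_{ij}‖. Define γ_{ii} = κᵢ and γ_{ij} = γ_{wi} ∘ αⱼ⁻¹ for i ≠ j, and assume there are 𝒦∞ functions φᵢ with max_{j} φᵢ⁻¹ ∘ γ_{ij} ∘ φⱼ < Id. Then B(x) :=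 max_i φᵢ⁻¹(Bᵢ(xᵢ)) satisfies: for every x = (x₁,…,x_N) there exists u = (u₁,…,u_N) with B(f(x,u)) ≤ κ(B(x)), where κ := max_{i,j} φᵢ⁻¹ ∘ γ_{ij} ∘ φⱼ < Id, and f is the interconnected transition map. -/
open scoped NNReal

/-- A class `𝒦∞` function: continuous, strictly increasing, zero at zero,
tending to infinity. -/
def KInf (f : ℝ≥0 → ℝ≥0) : Prop :=
  Continuous f ∧ StrictMono f ∧ f 0 = 0 ∧ Filter.Tendsto f Filter.atTop Filter.atTop

theorem compositional_barrier_inequality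
    {ι : Type*} [Fintype ι] [Nonempty ι] [DecidableEq ι]
    (X U W : ι → Type*)
    (f : ∀ i, X i → U i → W i → X i)
    -- interconnection: internal input of subsystem `i` as a function of all states
    (wmap : ∀ i, (∀ j, X j) → W i)
    -- infinity norms of internal inputs and of outputs
    (nW : ∀ i, W i → ℝ≥0) (nH : ∀ i, X i → ℝ≥0)
    -- `‖wᵢ‖ = max_{j ≠ i} ‖w_{ij}‖` with `w_{ij} = h_{ji}(x_j)` and `‖h_{ji}(x_j)‖ ≤ ‖h_j(x_j)‖`
    (hwbound : ∀ i (x : ∀ j, X j),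
      nW i (wmap i x) ≤ (Finset.univ.erase i).sup fun j => nH j (x j))
    (B : ∀ i, X i → ℝ≥0)
    (α κ γw : ι → ℝ≥0 → ℝ≥0) (αinv : ι → ℝ≥0 → ℝ≥0)
    (hα : ∀ i, KInf (α i)) (hκ : ∀ i, KInf (κ i)) (hγw : ∀ i, KInf (γw i))
    (hαinv : ∀ i, Function.LeftInverse (αinv i) (α i) ∧ Function.RightInverse (αinv i) (α i))
    (hκle : ∀ i s, κ i s ≤ s)
    -- (a) lower bound by the output norm
    (hBa : ∀ i (xi : X i), α i (nH i xi) ≤ B i xi)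
    -- (b) local dissipation inequality in max-form
    (hBd : ∀ i (xi : X i), ∃ ui : U i, ∀ wi : W i,
      B i (f i xi ui wi) ≤ max (κ i (B i xi)) (γw i (nW i wi)))
    (φ φinv : ι → ℝ≥0 → ℝ≥0) (hφ : ∀ i, KInf (φ i))
    (hφinv : ∀ i, Function.LeftInverse (φinv i) (φ i) ∧ Function.RightInverse (φinv i) (φ i))
    (γ : ι → ι → ℝ≥0 → ℝ≥0)
    (hγdef : ∀ i j, γ i j = if i = j then κ i else γw i ∘ αinv j)
    -- small-gain condition:  max_j φᵢ⁻¹ ∘ γ_{ij} ∘ φⱼ < Id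
    (hsg : ∀ i s, 0 < s →
      (Finset.univ.sup' Finset.univ_nonempty fun j => φinv i (γ i j (φ j s))) < s) :
    (∀ x : ∀ i, X i, ∃ u : ∀ i, U i,
      (Finset.univ.sup' Finset.univ_nonempty fun i =>
        φinv i (B i (f i (x i) (u i) (wmap i x)))) ≤
      (Finset.univ.sup' Finset.univ_nonempty fun i : ι =>
        Finset.univ.sup' Finset.univ_nonempty fun j : ι =>
          φinv i (γ i j (φ j
            (Finset.univ.sup' Finset.univ_nonempty fun l => φinv l (B l (x l))))))) ∧
    (∀ s, 0 < s →
      (Finset.univ.sup' Finset.univ_nonempty fun i : ι =>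
        Finset.univ.sup' Finset.univ_nonempty fun j : ι => φinv i (γ i j (φ j s))) < s) := by
  constructor
  · intro x
    choose u hu using fun i => hBd i (x i)
    refine ⟨u, ?_⟩
    set s : ℝ≥0 := Finset.univ.sup' Finset.univ_nonempty fun l => φinv l (B l (x l)) with hsdef
    have φmono : ∀ i, Monotone (φ i) := fun i => (hφ i).2.1.monotone
    have φinvmono : ∀ i, Monotone (φinv i) := fun i a b hab =>
      (hφ i).2.1.le_iff_le.mp (by rw [(hφinv i).2 a, (hφinv i).2 b]; exact hab)
    have αinvmono : ∀ i, Monotone (αinv i) := fun i a b hab =>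
      (hα i).2.1.le_iff_le.mp (by rw [(hαinv i).2 a, (hαinv i).2 b]; exact hab)
    apply Finset.sup'_le
    intro i _
    have key : B i (f i (x i) (u i) (wmap i x)) ≤
        Finset.univ.sup' Finset.univ_nonempty fun j => γ i j (φ j s) := by
      refine le_trans (hu i (wmap i x)) (max_le ?_ ?_)
      · have h1 : φinv i (B i (x i)) ≤ s :=
          Finset.le_sup' (fun l => φinv l (B l (x l))) (Finset.mem_univ i)
        have h2 : B i (x i) ≤ φ i s := by
          calc B i (x i) = φ i (φinv i (B i (x i))) := ((hφinv i).2 _).symm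
            _ ≤ φ i s := φmono i h1
        calc κ i (B i (x i)) ≤ κ i (φ i s) := (hκ i).2.1.monotone h2
          _ = γ i i (φ i s) := by rw [hγdef]; simp
          _ ≤ _ := Finset.le_sup' (fun j => γ i j (φ j s)) (Finset.mem_univ i)
      · by_cases hne : (Finset.univ.erase i).Nonempty
        · obtain ⟨j₀, hj₀mem, hj₀⟩ := Finset.exists_mem_eq_sup' hne (fun j => nH j (x j))
          have hij : i ≠ j₀ := fun h => (Finset.ne_of_mem_erase hj₀mem) h.symm
          have hW : nW i (wmap i x) ≤ nH j₀ (x j₀) := by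
            refine (hwbound i x).trans ?_
            rw [← Finset.sup'_eq_sup hne, hj₀]
          have hH : nH j₀ (x j₀) ≤ αinv j₀ (φ j₀ s) := by
            have h3 : nH j₀ (x j₀) ≤ αinv j₀ (B j₀ (x j₀)) := by
              calc nH j₀ (x j₀) = αinv j₀ (α j₀ (nH j₀ (x j₀))) := ((hαinv j₀).1 _).symm
                _ ≤ αinv j₀ (B j₀ (x j₀)) := αinvmono j₀ (hBa j₀ (x j₀))
            refine h3.trans (αinvmono j₀ ?_)
            calc B j₀ (x j₀) = φ j₀ (φinv j₀ (B j₀ (x j₀))) := ((hφinv j₀).2 _).symm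
              _ ≤ φ j₀ s := φmono j₀
                (Finset.le_sup' (fun l => φinv l (B l (x l))) (Finset.mem_univ j₀))
          calc γw i (nW i (wmap i x)) ≤ γw i (αinv j₀ (φ j₀ s)) :=
                (hγw i).2.1.monotone (hW.trans hH)
            _ = γ i j₀ (φ j₀ s) := by rw [hγdef]; simp [hij]
            _ ≤ _ := Finset.le_sup' (fun j => γ i j (φ j s)) (Finset.mem_univ j₀)
        · have h0 : nW i (wmap i x) = 0 := by
            have h := hwbound i x
            rw [Finset.not_nonempty_iff_eq_empty.mp hne] at h
            simpa using le_antisymm (by simpa using h) zero_le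
          rw [h0, (hγw i).2.2.1]
          exact zero_le
    refine le_trans ?_ (Finset.le_sup'
      (fun i => Finset.univ.sup' Finset.univ_nonempty fun j => φinv i (γ i j (φ j s)))
      (Finset.mem_univ i))
    calc φinv i (B i (f i (x i) (u i) (wmap i x)))
        ≤ φinv i (Finset.univ.sup' Finset.univ_nonempty fun j => γ i j (φ j s)) :=
          φinvmono i key
      _ = Finset.univ.sup' Finset.univ_nonempty fun j => φinv i (γ i j (φ j s)) :=
          Finset.comp_sup'_eq_sup'_comp Finset.univ_nonempty (φinv i)
            (fun a b => (φinvmono i).map_sup a b)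
  · intro s hs
    rw [Finset.sup'_lt_iff]
    intro i _
    exact hsg i s hs
end

section
/- Additive-to-max conversion of dissipation inequalities: Suppose B : X → ℝ≥0 and for all x ∈ X and all w ∈ W there is an inequality B(f(x,w)) ≤ κ̂(B(x)) + γ̂(‖w‖), where κ̂ ∈ 𝒦∞ with κ̂ < Id (κ̂(s) < s for s > 0, and Id − κ̂ ∈ 𝒦∞). Then for any ψ ∈ 𝒦∞ with ψ < Id, setting κ := Id − (Id − ψ) ∘ (Id − κ̂) and γ := (Id − κ̂)⁻¹ ∘ ψ⁻¹ ∘ γ̂, one has B(f(x,w)) ≤ max{κ(B(x)), γ(‖w‖)} for all x, w; moreover κ ∈ 𝒦∞ and κ ≤ Id. -/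
open scoped NNReal

theorem additive_to_max_dissipation {X W : Type*}
    (f : X → W → X) (B : X → ℝ≥0) (nW : W → ℝ≥0)
    (κh γh ψ : ℝ≥0 → ℝ≥0)
    (hκh : KInf κh) (hκlt : ∀ s, 0 < s → κh s < s)
    (hIdκ : KInf fun s => s - κh s)
    (hψ : KInf ψ) (hψlt : ∀ s, 0 < s → ψ s < s)
    (hIdψ : KInf fun s => s - ψ s)
    (γhK : KInf γh)
    (ρinv ψinv : ℝ≥0 → ℝ≥0)
    (hρli : Function.LeftInverse ρinv fun s => s - κh s)
    (hρri : Function.RightInverse ρinv fun s => s - κh s)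
    (hψli : Function.LeftInverse ψinv ψ)
    (hψri : Function.RightInverse ψinv ψ)
    (hdiss : ∀ x w, B (f x w) ≤ κh (B x) + γh (nW w)) :
    (∀ x w, B (f x w) ≤
      max (B x - ((B x - κh (B x)) - ψ (B x - κh (B x)))) (ρinv (ψinv (γh (nW w))))) ∧
    KInf (fun s => s - ((s - κh s) - ψ (s - κh s))) ∧
    (∀ s, s - ((s - κh s) - ψ (s - κh s)) ≤ s) := by

  have hκle : ∀ s, κh s ≤ s := by
    intro s
    rcases eq_or_lt_of_le (zero_le : (0:ℝ≥0) ≤ s) with h | h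
    · simp [← h, hκh.2.2.1]
    · exact (hκlt s h).le
  have hψle : ∀ s, ψ s ≤ s := by
    intro s
    rcases eq_or_lt_of_le (zero_le : (0:ℝ≥0) ≤ s) with h | h
    · simp [← h, hψ.2.2.1]
    · exact (hψlt s h).le
  have hkey : ∀ s, s - ((s - κh s) - ψ (s - κh s)) = κh s + ψ (s - κh s) := by
    intro s
    rw [tsub_tsub_assoc tsub_le_self (hψle _), tsub_tsub_cancel_of_le (hκle s)]
  refine ⟨?_, ?_, fun s => tsub_le_self⟩
  · intro x w
    set a := B x
    set g := γh (nW w)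
    rw [hkey]
    rcases le_or_gt g (ψ (a - κh a)) with hle | hlt
    · exact le_max_of_le_left ((hdiss x w).trans (add_le_add_right hle _))
    · refine le_max_of_le_right ((hdiss x w).trans ?_)
      set t := ψinv g with ht
      have hgt : ψ t = g := hψri g
      have hrt : a - κh a < t := by
        have := hlt.trans_eq hgt.symm
        exact hψ.2.1.lt_iff_lt.mp this
      set a' := ρinv t with ha'
      have ha't : a' - κh a' = t := hρri t
      have haa' : a < a' := by
        have : a - κh a < a' - κh a' := ha't ▸ hrt
        exact hIdκ.2.1.lt_iff_lt.mp this
      have h1 : κh a ≤ κh a' := hκh.2.1.monotone haa'.le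
      have h2 : g ≤ t := hgt ▸ hψle t
      calc κh a + g ≤ κh a' + (a' - κh a') := add_le_add h1 (ha't ▸ h2)
        _ = a' := add_tsub_cancel_of_le (hκle a')
  · have heq : (fun s => s - ((s - κh s) - ψ (s - κh s))) =
        fun s => κh s + ψ (s - κh s) := funext hkey
    rw [heq]
    refine ⟨hκh.1.add (hψ.1.comp hIdκ.1), ?_, ?_, ?_⟩
    · intro x y hxy
      exact add_lt_add_of_lt_of_le (hκh.2.1 hxy)
        ((hψ.2.1.comp hIdκ.2.1).monotone hxy.le)
    · simp [hκh.2.2.1, show (0:ℝ≥0) - κh 0 = 0 by simp [hκh.2.2.1], hψ.2.2.1]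
    · exact Filter.tendsto_atTop_mono (fun s => le_self_add) hκh.2.2.2
end

section
/- For nonnegative reals a, b and 𝒦∞ functions κ̂, ψ with κ̂(s) < s and ψ(s) < s for all s > 0 such that Id − κ̂ and Id − ψ are strictly increasing: κ̂(a) + b ≤ max{ a − (Id − ψ)((Id − κ̂)(a)), ((Id − κ̂)⁻¹ ∘ ψ⁻¹)(b) }. -/
open scoped NNReal

theorem additive_to_max_pointwise
    (a b : ℝ≥0) (κh ψ : ℝ≥0 → ℝ≥0)
    (hκcont : Continuous κh) (hκmono : StrictMono κh) (hκ0 : κh 0 = 0)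
    (hκtop : Filter.Tendsto κh Filter.atTop Filter.atTop)
    (hψcont : Continuous ψ) (hψmono : StrictMono ψ) (hψ0 : ψ 0 = 0)
    (hψtop : Filter.Tendsto ψ Filter.atTop Filter.atTop)
    (hκlt : ∀ s, 0 < s → κh s < s) (hψlt : ∀ s, 0 < s → ψ s < s)
    (hIdκ : StrictMono fun s => s - κh s) (hIdψ : StrictMono fun s => s - ψ s)
    (ρinv ψinv : ℝ≥0 → ℝ≥0)
    (hρli : Function.LeftInverse ρinv fun s => s - κh s)
    (hρri : Function.RightInverse ρinv fun s => s - κh s)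
    (hψli : Function.LeftInverse ψinv ψ)
    (hψri : Function.RightInverse ψinv ψ) :
    κh a + b ≤ max (a - ((a - κh a) - ψ (a - κh a))) (ρinv (ψinv b)) := by
  have hκle : ∀ s, κh s ≤ s := by
    intro s
    rcases eq_or_lt_of_le (zero_le : (0 : ℝ≥0) ≤ s) with h | h
    · simp [← h, hκ0]
    · exact (hκlt s h).le
  have hψle : ∀ s, ψ s ≤ s := by
    intro s
    rcases eq_or_lt_of_le (zero_le : (0 : ℝ≥0) ≤ s) with h | h
    · simp [← h, hψ0]
    · exact (hψlt s h).le
  set u : ℝ≥0 := a - κh a with hu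
  by_cases hb : b ≤ ψ u
  · refine le_max_of_le_left ?_
    have h1 : κh a + b ≤ κh a + ψ u := by gcongr
    refine h1.trans ?_
    apply le_tsub_of_add_le_right
    have : ψ u + (u - ψ u) = u := add_tsub_cancel_of_le (hψle u)
    calc κh a + ψ u + (u - ψ u) = κh a + u := by rw [add_assoc, this]
      _ = a := by rw [hu, add_tsub_cancel_of_le (hκle a)]
    exact le_rfl
  · refine le_max_of_le_right ?_
    push_neg at hb
    set c := ψinv b with hc
    have hbc : b = ψ c := (hψri b).symm
    have hcu : u < c := by
      by_contra hcu
      push_neg at hcu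
      exact absurd (hψmono.monotone hcu) (not_le.mpr (hbc ▸ hb))
    set d := ρinv c with hd
    have hdc : d - κh d = c := hρri c
    have had : a ≤ d := by
      have := hIdκ.lt_iff_lt.mp (show (fun s => s - κh s) a < (fun s => s - κh s) d by
        simpa [hdc, hu] using hcu)
      exact this.le
    calc κh a + b = κh a + ψ (d - κh d) := by rw [hbc, hdc]
      _ ≤ κh d + (d - κh d) := by
          gcongr
          · exact hκmono.monotone had
          · exact hψle _
      _ = d := add_tsub_cancel_of_le (hκle d)
end
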